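/- Let p be a prime number and let c be a real number with c > p. Then the Euclidean minimum of ℤ with respect to f_{p,c} equals 1, that is, sup_{ξ ∈ ℚ} inf_{q ∈ ℤ} f_{p,c}(ξ − q) = 1. -/

import Mathlib

open scoped Classical

/-- The weighted norm `f_{p,c}` on `ℚ`:  `f_{p,c}(x) = |x| · (c/p)^{v_p(x)}` for `x ≠ 0`,
and `f_{p,c}(0) = 0`, where `v_p` is the `p`-adic valuation. -/
noncomputable def fpc (p : ℕ) (c : ℝ) (x : ℚ) : ℝ :=
  if x = 0 then 0 else |(x : ℝ)| * (c / p) ^ (padicValRat p x)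

section Aux

variable {p : ℕ} [hp : Fact p.Prime] {c : ℝ}

lemma fpc_nonneg (hc : 0 < c) (x : ℚ) : 0 ≤ fpc p c x := by
  unfold fpc
  split
  · exact le_refl _
  · exact mul_nonneg (abs_nonneg _) (zpow_nonneg (by positivity) _)

lemma fpc_bddBelow (hc : 0 < c) (ξ : ℚ) :
    BddBelow (Set.range fun q : ℤ => fpc p c (ξ - q)) :=
  ⟨0, by rintro y ⟨q, rfl⟩; exact fpc_nonneg hc _⟩

lemma fpc_le_one (hcp : 1 ≤ c / (p : ℝ)) {x : ℚ} (h1 : |(x : ℚ)| ≤ 1)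
    (hv : padicValRat p x ≤ 0) : fpc p c x ≤ 1 := by
  unfold fpc
  split
  · exact zero_le_one
  · have h1' : |(x : ℝ)| ≤ 1 := by
      rw [← Rat.cast_abs]
      exact_mod_cast h1
    calc |(x : ℝ)| * (c / p) ^ (padicValRat p x)
        ≤ 1 * 1 := by
          apply mul_le_mul h1' (zpow_le_one_of_nonpos₀ hcp hv) (zpow_nonneg (by linarith) _)
            zero_le_one
      _ = 1 := mul_one 1

lemma fpc_inf_le_one (hc : (p : ℝ) < c) (ξ : ℚ) :
    (⨅ q : ℤ, fpc p c (ξ - q)) ≤ 1 := by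
  have hp0 : (0 : ℝ) < p := by exact_mod_cast hp.out.pos
  have hc0 : 0 < c := lt_trans hp0 hc
  have hcp : 1 ≤ c / (p : ℝ) := (one_le_div hp0).mpr hc.le
  by_cases hint : ∃ m : ℤ, (m : ℚ) = ξ
  · obtain ⟨m, rfl⟩ := hint
    refine le_trans (ciInf_le (fpc_bddBelow hc0 _) m) ?_
    simp [fpc]
  · push_neg at hint
    have hne : ∀ q : ℤ, ξ - q ≠ 0 := fun q h => hint q (sub_eq_zero.mp h).symm
    have hfl : |ξ - (⌊ξ⌋ : ℚ)| ≤ 1 := by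
      have h1 := Int.floor_le ξ
      have h2 := Int.lt_floor_add_one ξ
      rw [abs_le]; constructor <;> [linarith; linarith]
    by_cases hv : padicValRat p (ξ - ⌊ξ⌋) ≤ 0
    · exact le_trans (ciInf_le (fpc_bddBelow hc0 ξ) ⌊ξ⌋) (fpc_le_one hcp hfl hv)
    · push_neg at hv
      have key : padicValRat p (ξ - ((⌊ξ⌋ + 1 : ℤ) : ℚ)) ≤ 0 := by
        by_contra h
        push_neg at h
        have hsum : (ξ - (⌊ξ⌋ : ℚ)) + (-(ξ - ((⌊ξ⌋ + 1 : ℤ) : ℚ))) = 1 := by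
          push_cast; ring
        have hmin := padicValRat.min_le_padicValRat_add (p := p)
          (q := ξ - (⌊ξ⌋ : ℚ)) (r := -(ξ - ((⌊ξ⌋ + 1 : ℤ) : ℚ))) (by rw [hsum]; norm_num)
        rw [hsum, padicValRat.one, padicValRat.neg] at hmin
        have := lt_min hv h
        omega
      have hfl2 : |ξ - ((⌊ξ⌋ + 1 : ℤ) : ℚ)| ≤ 1 := by
        have h1 := Int.floor_le ξ
        have h2 := Int.lt_floor_add_one ξ
        rw [abs_le]; push_cast; constructor <;> [linarith; linarith]
      exact le_trans (ciInf_le (fpc_bddBelow hc0 ξ) (⌊ξ⌋ + 1)) (fpc_le_one hcp hfl2 key)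

lemma fpc_int_div (hc : 0 < c) {n : ℤ} (hn : n ≠ 0) {b : ℕ} (hb : 0 < b) (hpb : ¬ p ∣ b) :
    fpc p c ((n : ℚ) / (b : ℚ))
      = (|n| : ℝ) / (b : ℝ) * (c / p) ^ ((padicValInt p n : ℤ)) := by
  have hbQ : (b : ℚ) ≠ 0 := by exact_mod_cast hb.ne'
  have hnQ : (n : ℚ) ≠ 0 := by exact_mod_cast hn
  have hx : (n : ℚ) / (b : ℚ) ≠ 0 := div_ne_zero hnQ hbQ
  have hvb : padicValRat p ((b : ℚ)) = 0 := by
    have : padicValRat p (((b : ℤ) : ℚ)) = padicValInt p (b : ℤ) := padicValRat.of_int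
    rw [show ((b : ℤ) : ℚ) = (b : ℚ) by push_cast; ring] at this
    rw [this, padicValInt.of_nat, padicValNat.eq_zero_of_not_dvd hpb]
    simp
  have hval : padicValRat p ((n : ℚ) / (b : ℚ)) = (padicValInt p n : ℤ) := by
    rw [padicValRat.div hnQ hbQ, hvb, padicValRat.of_int, sub_zero]
  rw [fpc, if_neg hx, hval]
  congr 1
  push_cast
  rw [abs_div, abs_of_nonneg (by positivity : (0:ℝ) ≤ (b:ℝ))]

set_option maxHeartbeats 1000000 in
lemma fpc_exists_inf_ge (hc : (p : ℝ) < c) {ε : ℝ} (hε : 0 < ε) :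
    ∃ ξ : ℚ, 1 - ε ≤ ⨅ q : ℤ, fpc p c (ξ - q) := by
  have hp2 : 2 ≤ p := hp.out.two_le
  have hp0 : (0 : ℝ) < p := by exact_mod_cast hp.out.pos
  have hc2 : (2 : ℝ) ≤ c := le_trans (by exact_mod_cast hp2) hc.le
  have hc0 : (0 : ℝ) < c := by linarith
  have hc1 : (1 : ℝ) ≤ c := by linarith
  have hpc1 : (p : ℝ) / c < 1 := (div_lt_one hc0).mpr hc
  have hpc0 : (0 : ℝ) ≤ (p : ℝ) / c := by positivity
  have hic1 : (1 : ℝ) / c < 1 := by rw [div_lt_one hc0]; linarith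
  have hic0 : (0 : ℝ) ≤ (1 : ℝ) / c := by positivity
  obtain ⟨k1, hk1⟩ := exists_pow_lt_of_lt_one hε hpc1
  obtain ⟨k2, hk2⟩ := exists_pow_lt_of_lt_one (show (0:ℝ) < ε/3 by linarith) hic1
  set k := max k1 k2 with hk
  have hpck : ((p : ℝ) / c) ^ k < ε :=
    lt_of_le_of_lt (pow_le_pow_of_le_one hpc0 hpc1.le (le_max_left _ _)) hk1
  have hick : ((1 : ℝ) / c) ^ k < ε / 3 :=
    lt_of_le_of_lt (pow_le_pow_of_le_one hic0 hic1.le (le_max_right _ _)) hk2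
  have hck1 : (1 : ℝ) ≤ c ^ k := one_le_pow₀ hc1
  have hck0 : (0 : ℝ) < c ^ k := by positivity
  have h3ck : 3 / c ^ k < ε := by
    have : ((1:ℝ)/c)^k = 1 / c^k := by rw [div_pow, one_pow]
    rw [this] at hick
    rw [div_lt_iff₀ hck0] at hick ⊢
    linarith
  -- choose the denominator b
  set m : ℕ := ⌊c ^ k⌋₊ + 1 with hm
  set b : ℕ := if p ∣ m then m + 1 else m with hb
  have hmb : m ≤ b ∧ b ≤ m + 1 := by
    rw [hb]; split <;> omega
  have hpb : ¬ p ∣ b := by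
    rw [hb]; split
    · rename_i h
      intro h2
      have h3 : p ∣ (m + 1) - m := Nat.dvd_sub h2 h
      simp at h3
      have := hp.out.two_le
      omega
    · assumption
  have hckb : c ^ k < (b : ℝ) := by
    calc c ^ k < (⌊c ^ k⌋₊ : ℝ) + 1 := Nat.lt_floor_add_one _
    _ ≤ (b : ℝ) := by exact_mod_cast (by exact_mod_cast hmb.1 : ((m : ℝ)) ≤ b)
  have hbck2 : (b : ℝ) ≤ c ^ k + 2 := by
    have h1 : (⌊c ^ k⌋₊ : ℝ) ≤ c ^ k := Nat.floor_le hck0.le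
    have h2 : (b : ℝ) ≤ (m : ℝ) + 1 := by exact_mod_cast hmb.2
    rw [hm] at h2
    push_cast at h2
    linarith
  have hb0 : 0 < b := by omega
  have hbR0 : (0 : ℝ) < b := by exact_mod_cast hb0
  have hpkck : (p : ℝ) ^ k ≤ c ^ k := pow_le_pow_left₀ hp0.le hc.le k
  have hpkb : (p : ℝ) ^ k < b := lt_of_le_of_lt hpkck hckb
  refine ⟨((p : ℤ) ^ k : ℤ) / (b : ℚ), le_ciInf fun q => ?_⟩
  set n : ℤ := (p : ℤ) ^ k - q * b with hn
  have hpk0 : (0 : ℤ) < (p : ℤ) ^ k := by positivity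
  have hnz : n ≠ 0 := by
    intro h
    rw [hn] at h
    have h' : (p : ℤ) ^ k = (b : ℤ) * q := by
      have := mul_comm q (b : ℤ)
      linarith [mul_comm q ((b : ℤ))]
    have hd : ((b : ℤ)) ∣ (p : ℤ) ^ k := ⟨q, h'⟩
    have := Int.le_of_dvd hpk0 hd
    have : ((b : ℝ)) ≤ (p : ℝ) ^ k := by exact_mod_cast this
    linarith
  have harg : (((p : ℤ) ^ k : ℤ) : ℚ) / (b : ℚ) - (q : ℚ) = (n : ℚ) / (b : ℚ) := by
    have hbQ : (b : ℚ) ≠ 0 := by exact_mod_cast hb0.ne'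
    field_simp [hn]
    rw [hn]; push_cast
    ring
  rw [harg, fpc_int_div hc0 hnz hb0 hpb]
  set v : ℕ := padicValInt p n with hv
  have hdvd : (p : ℤ) ^ v ∣ n := padicValInt_dvd n
  have hpvn : (p : ℝ) ^ v ≤ |(n : ℝ)| := by
    have h1 : ((p : ℤ)) ^ v ∣ |n| := (dvd_abs _ _).mpr hdvd
    have h2 := Int.le_of_dvd (abs_pos.mpr hnz) h1
    have : ((p : ℤ) ^ v : ℝ) ≤ (|n| : ℝ) := by exact_mod_cast h2
    simpa [abs_of_nonneg] using this
  have hnabs : ((|n| : ℤ) : ℝ) = |(n : ℝ)| := by push_cast; ring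
  have hcpv : ((c / p) ^ ((v : ℤ))) = (c / p) ^ v := zpow_natCast _ _
  have hcp0 : (0 : ℝ) < c / p := by positivity
  have hcp1 : (1 : ℝ) ≤ c / p := (one_le_div hp0).mpr hc.le
  rw [hcpv]
  have hpv0 : (0 : ℝ) < (p : ℝ) ^ v := by positivity
  rcases le_or_gt k v with hkv | hvk
  · -- v ≥ k : value ≥ c^v / b ≥ c^k / b ≥ 1 - ε
    have e0 : (p : ℝ) ^ v / b * (c / p) ^ v = c ^ v / b := by
      rw [div_pow]
      field_simp
    have h1 : c ^ v / (b : ℝ) ≤ |(n : ℝ)| / b * (c / p) ^ v := by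
      rw [← e0]
      gcongr
    have h2 : c ^ k / (b : ℝ) ≤ c ^ v / b := by
      gcongr
    have h3ck' : 3 < ε * c ^ k := by
      rw [div_lt_iff₀ hck0] at h3ck
      linarith
    have h3 : 1 - ε ≤ c ^ k / (b : ℝ) := by
      rw [le_div_iff₀ hbR0]
      nlinarith [mul_nonneg hε.le (sub_nonneg.mpr hckb.le)]
    linarith
  · -- v < k
    have hdvd2 : (p : ℤ) ^ v ∣ q * (b : ℤ) := by
      have h1 : (p : ℤ) ^ v ∣ (p : ℤ) ^ k := pow_dvd_pow _ hvk.le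
      have h2 : (p : ℤ) ^ v ∣ (p : ℤ) ^ k - n := dvd_sub h1 hdvd
      have h3 : (p : ℤ) ^ k - n = q * b := by rw [hn]; ring
      rwa [h3] at h2
    have hcop : IsCoprime ((p : ℤ) ^ v) ((b : ℤ)) := by
      rw [Int.isCoprime_iff_gcd_eq_one]
      have h1 : Nat.Coprime (p ^ v) b :=
        Nat.Coprime.pow_left _ ((Nat.Prime.coprime_iff_not_dvd hp.out).mpr hpb)
      have h2 : Int.gcd ((p ^ v : ℕ) : ℤ) ((b : ℕ) : ℤ) = Nat.gcd (p ^ v) b :=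
        Int.gcd_natCast_natCast _ _
      rw [show ((p : ℤ) ^ v) = ((p ^ v : ℕ) : ℤ) by push_cast; ring]
      rw [h2]
      exact h1
    have hqd : (p : ℤ) ^ v ∣ q := hcop.dvd_of_dvd_mul_right hdvd2
    have hq0 : q ≠ 0 := by
      intro h
      have hnp : n = (p : ℤ) ^ k := by rw [hn, h]; ring
      have hvalk : padicValInt p ((p : ℤ) ^ k) = k := by
        rw [show ((p : ℤ) ^ k) = ((p ^ k : ℕ) : ℤ) by push_cast; ring,
          padicValInt.of_nat, padicValNat.prime_pow]
      have : v = k := by rw [hv, hnp, hvalk]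
      omega
    have hqabs : (p : ℝ) ^ v ≤ |(q : ℝ)| := by
      have h1 : ((p : ℤ)) ^ v ∣ |q| := (dvd_abs _ _).mpr hqd
      have h2 := Int.le_of_dvd (abs_pos.mpr hq0) h1
      have h3 : (((p : ℤ) ^ v : ℤ) : ℝ) ≤ ((|q| : ℤ) : ℝ) := by exact_mod_cast h2
      push_cast at h3
      exact h3
    have hnlb : (p : ℝ) ^ v * b - (p : ℝ) ^ k ≤ |(n : ℝ)| := by
      have h1 : |(q : ℝ) * (b : ℝ)| - |((p : ℝ) ^ k)| ≤ |(q : ℝ) * b - (p : ℝ) ^ k| :=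
        abs_sub_abs_le_abs_sub _ _
      have h2 : |(n : ℝ)| = |(q : ℝ) * b - (p : ℝ) ^ k| := by
        rw [hn]; push_cast; rw [abs_sub_comm]
      have h3 : |(q : ℝ) * b| = |(q : ℝ)| * b := by
        rw [abs_mul, abs_of_nonneg hbR0.le]
      have h4 : (p : ℝ) ^ v * b ≤ |(q : ℝ)| * b := mul_le_mul_of_nonneg_right hqabs hbR0.le
      have h5 : |((p : ℝ) ^ k)| = (p : ℝ) ^ k := abs_of_nonneg (by positivity)
      linarith
    rcases Nat.eq_zero_or_pos v with hv0 | hv1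
    · -- v = 0
      rw [hv0, pow_zero, mul_one]
      rw [le_div_iff₀ hbR0]
      have hpkeck : (p : ℝ) ^ k < ε * c ^ k := by
        have := hpck
        rw [div_pow, div_lt_iff₀ (by positivity : (0:ℝ) < c ^ k)] at this
        linarith
      have hnlb' : (b : ℝ) - (p : ℝ) ^ k ≤ |(n : ℝ)| := by
        have := hnlb
        rw [hv0, pow_zero, one_mul] at this
        exact this
      linarith [mul_nonneg hε.le (sub_nonneg.mpr hckb.le), hpkeck, hnlb']
    · -- 1 ≤ v < k
      have e1 : (p : ℝ) ^ v * (c / p) ^ v = c ^ v := by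
        rw [div_pow]; field_simp
      have e2 : ((p : ℝ) ^ k / b) * (c / p) ^ v ≤ 1 := by
        have a1 : ((p : ℝ) ^ k / b) ≤ ((p : ℝ) / c) ^ k := by
          rw [div_pow]
          exact div_le_div_of_nonneg_left (by positivity) hck0 hckb.le
        have a2 : ((c : ℝ) / p) ^ v ≤ (c / p) ^ k := pow_le_pow_right₀ hcp1 hvk.le
        have a3 : ((p : ℝ) / c) ^ k * (c / p) ^ k = 1 := by
          rw [← mul_pow]
          rw [show (p : ℝ) / c * (c / p) = 1 by field_simp]
          exact one_pow k
        calc ((p : ℝ) ^ k / b) * (c / p) ^ v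
            ≤ ((p : ℝ) / c) ^ k * (c / p) ^ k :=
              mul_le_mul a1 a2 (by positivity) (by positivity)
          _ = 1 := a3
      have e3 : ((p : ℝ) ^ v * b - (p : ℝ) ^ k) / b * (c / p) ^ v ≤ |(n : ℝ)| / b * (c / p) ^ v := by
        gcongr
      have e4 : ((p : ℝ) ^ v * b - (p : ℝ) ^ k) / b * (c / p) ^ v
          = (p : ℝ) ^ v * (c / p) ^ v - ((p : ℝ) ^ k / b) * (c / p) ^ v := by
        field_simp
      have e5 : c ≤ c ^ v := le_self_pow₀ hc1 hv1.ne'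
      rw [e4, e1] at e3
      linarith

end Aux

theorem fpc_min_eq_one_of_gt (p : ℕ) (hp : p.Prime) (c : ℝ) (hc : (p : ℝ) < c) :
    (⨆ ξ : ℚ, ⨅ q : ℤ, fpc p c (ξ - q)) = 1 := by
  haveI : Fact p.Prime := ⟨hp⟩
  have hp0 : (0 : ℝ) < p := by exact_mod_cast hp.pos
  have hc0 : 0 < c := lt_trans hp0 hc
  have hub : ∀ ξ : ℚ, (⨅ q : ℤ, fpc p c (ξ - q)) ≤ 1 := fpc_inf_le_one hc
  have hbdd : BddAbove (Set.range fun ξ : ℚ => ⨅ q : ℤ, fpc p c (ξ - q)) :=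
    ⟨1, by rintro y ⟨ξ, rfl⟩; exact hub ξ⟩
  refine le_antisymm (ciSup_le hub) ?_
  by_contra h
  push_neg at h
  set S := ⨆ ξ : ℚ, ⨅ q : ℤ, fpc p c (ξ - q) with hS
  obtain ⟨ξ, hξ⟩ := fpc_exists_inf_ge hc (show (0:ℝ) < (1 - S)/2 by linarith)
  have h2 := le_ciSup hbdd ξ
  rw [← hS] at h2
  linarith
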